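/- arXiv:2105.05374 — 2 statements merged into one kernel-verified Lean document; each statement's English description precedes it below -/
import Mathlib

section
/- Suppose n ≥ 2, X is a Hausdorff space, E is an analytic equivalence relation on X, G is an E-invariant analytic n-dimensional dihypergraph on X, and A ⊆ X is a G-independent analytic set. Then there is an E-invariant G-independent Borel set B ⊆ X containing A. -/
open MeasureTheory

open Set in
lemma analyticSet_pi {X : Type} [TopologicalSpace X] {n : ℕ} {S : Fin n → Set X}
    (h : ∀ i, AnalyticSet (S i)) : AnalyticSet {x : Fin n → X | ∀ i, x i ∈ S i} := by
  choose γ γt γp f hf hrange using fun i => (analyticSet_iff_exists_polishSpace_range.1 (h i))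
  letI : ∀ i, TopologicalSpace (γ i) := γt
  letI : ∀ i, PolishSpace (γ i) := γp
  refine analyticSet_iff_exists_polishSpace_range.2
    ⟨∀ i, γ i, inferInstance, inferInstance, fun b i => f i (b i),
      continuous_pi fun i => (hf i).comp (continuous_apply i), ?_⟩
  ext x
  constructor
  · rintro ⟨b, rfl⟩ i
    rw [← hrange i]; exact ⟨b i, rfl⟩
  · intro hx
    have : ∀ i, ∃ b, f i b = x i := fun i => by
      have := hx i; rw [← hrange i] at this; exact this
    choose b hb using this
    exact ⟨b, funext hb⟩

open Set in
lemma analyticSet_inter {X : Type} [TopologicalSpace X] [T2Space X] {s t : Set X}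
    (hs : AnalyticSet s) (ht : AnalyticSet t) : AnalyticSet (s ∩ t) := by
  have : s ∩ t = ⋂ b : Bool, (if b then s else t) := by
    ext x; simp [Bool.forall_bool, and_comm]
  rw [this]
  exact AnalyticSet.iInter fun b => by cases b <;> simpa

open Set in
lemma analyticSet_prod {X Y : Type} [TopologicalSpace X] [TopologicalSpace Y]
    {s : Set X} {t : Set Y} (hs : AnalyticSet s) (ht : AnalyticSet t) :
    AnalyticSet (s ×ˢ t) := by
  rcases analyticSet_iff_exists_polishSpace_range.1 hs with ⟨γ, γt, γp, f, fc, hfr⟩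
  rcases analyticSet_iff_exists_polishSpace_range.1 ht with ⟨δ, δt, δp, g, gc, hgr⟩
  letI := γt; letI := δt; haveI := γp; haveI := δp
  refine analyticSet_iff_exists_polishSpace_range.2
    ⟨γ × δ, inferInstance, inferInstance, Prod.map f g, fc.prodMap gc, ?_⟩
  rw [Set.range_prodMap, hfr, hgr]

open Set in
lemma borel_analytic {X : Type} [TopologicalSpace X] [T2Space X]
    (hX : AnalyticSet (univ : Set X)) {B : Set X}
    (hB : MeasurableSet[borel X] B) : AnalyticSet B := by
  letI : MeasurableSpace X := borel X
  haveI : BorelSpace X := ⟨rfl⟩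
  rw [AnalyticSet] at hX
  rcases hX with h | ⟨f, fc, hf⟩
  · have : B = ∅ := eq_empty_of_subset_empty (h ▸ subset_univ B)
    rw [this]; exact analyticSet_empty
  · have hsurj : Function.Surjective f := Set.range_eq_univ.1 hf
    have : B = f '' (f ⁻¹' B) := (Set.image_preimage_eq B hsurj).symm
    rw [this]
    exact ((fc.measurable hB).analyticSet).image_of_continuous fc

theorem invariant_analytic_separation_dihypergraph
    (n : ℕ) (hn : 2 ≤ n) (X : Type) [TopologicalSpace X] [T2Space X]
    (E : X → X → Prop) (hE : Equivalence E)
    (hEanalytic : AnalyticSet {p : X × X | E p.1 p.2})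
    (G : Set (Fin n → X)) (hG : AnalyticSet G)
    (hGnc : ∀ x ∈ G, ¬ ∀ i j : Fin n, x i = x j)
    (hGinv : ∀ x y : Fin n → X, (∀ i, E (x i) (y i)) → (x ∈ G ↔ y ∈ G))
    (A : Set X) (hA : AnalyticSet A)
    (hAind : ∀ x ∈ G, ¬ ∀ i, x i ∈ A) :
    ∃ B : Set X, MeasurableSet[borel X] B ∧ A ⊆ B ∧
      (∀ a b : X, E a b → (a ∈ B ↔ b ∈ B)) ∧
      ∀ x ∈ G, ¬ ∀ i, x i ∈ B := by
  classical
  letI : MeasurableSpace X := borel X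
  haveI : BorelSpace X := ⟨rfl⟩
  -- the whole space is analytic, since E is reflexive and analytic
  have hXan : AnalyticSet (Set.univ : Set X) := by
    have h1 : AnalyticSet (Prod.fst '' {p : X × X | E p.1 p.2}) :=
      hEanalytic.image_of_continuous continuous_fst
    have h2 : Prod.fst '' {p : X × X | E p.1 p.2} = Set.univ := by
      ext x
      simp only [Set.mem_image, Set.mem_univ, iff_true, Set.mem_setOf_eq]
      exact ⟨(x, x), hE.refl x, rfl⟩
    rwa [h2] at h1
  -- saturation operator
  set sat : Set X → Set X := fun S => {x | ∃ y ∈ S, E x y} with hsatdef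
  have hsat_an : ∀ S : Set X, AnalyticSet S → AnalyticSet (sat S) := by
    intro S hS
    have h3 : AnalyticSet ({p : X × X | E p.1 p.2} ∩ (Set.univ ×ˢ S)) :=
      analyticSet_inter hEanalytic (analyticSet_prod hXan hS)
    have h4 := h3.image_of_continuous (continuous_fst : Continuous (Prod.fst : X × X → X))
    have h5 : Prod.fst '' ({p : X × X | E p.1 p.2} ∩ (Set.univ ×ˢ S)) = sat S := by
      ext x
      constructor
      · rintro ⟨p, ⟨hp1, hp2⟩, rfl⟩
        exact ⟨p.2, hp2.2, hp1⟩
      · rintro ⟨y, hyS, hxy⟩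
        exact ⟨(x, y), ⟨hxy, trivial, hyS⟩, rfl⟩
    rwa [h5] at h4
  have hsat_sub : ∀ S : Set X, S ⊆ sat S := fun S x hx => ⟨x, hx, hE.refl x⟩
  have hsat_ind : ∀ S : Set X, (∀ x ∈ G, ¬ ∀ i, x i ∈ S) →
      (∀ x ∈ G, ¬ ∀ i, x i ∈ sat S) := by
    intro S hind x hx hall
    choose y hyS hExy using hall
    exact hind y ((hGinv x y hExy).1 hx) hyS
  -- the one-step Borel covering of an independent analytic set
  have step : ∀ S : Set X, AnalyticSet S → (∀ x ∈ G, ¬ ∀ i, x i ∈ S) →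
      ∃ T : Set X, MeasurableSet T ∧ S ⊆ T ∧ ∀ x ∈ G, ¬ ∀ i, x i ∈ T := by
    intro S hSan hSind
    have main : ∀ k : ℕ, k ≤ n → ∃ B : Fin n → Set X,
        (∀ i, MeasurableSet (B i)) ∧ (∀ i, S ⊆ B i) ∧
        ∀ x ∈ G, ¬ ∀ i : Fin n, ((i : ℕ) < k → x i ∈ B i) ∧ (k ≤ (i : ℕ) → x i ∈ S) := by
      intro k
      induction k with
      | zero =>
        intro _
        exact ⟨fun _ => Set.univ, fun _ => MeasurableSet.univ, fun _ => Set.subset_univ S,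
          fun x hx hall => hSind x hx fun i => (hall i).2 (Nat.zero_le _)⟩
      | succ k ih =>
        intro hk1
        obtain ⟨B, hBm, hBS, hBind⟩ := ih (Nat.le_of_succ_le hk1)
        set j : Fin n := ⟨k, hk1⟩ with hj
        set R : Fin n → Set X :=
          fun i => if (i : ℕ) < k then B i else if (i : ℕ) = k then Set.univ else S with hR
        have hRan : ∀ i, AnalyticSet (R i) := by
          intro i
          simp only [hR]
          split_ifs with h1 h2
          · exact borel_analytic hXan (hBm i)
          · exact hXan
          · exact hSan
        set D : Set X := (fun g : Fin n → X => g j) '' (G ∩ {g | ∀ i, g i ∈ R i}) with hD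
        have hDan : AnalyticSet D :=
          (analyticSet_inter hG (analyticSet_pi hRan)).image_of_continuous (continuous_apply j)
        have hdisj : Disjoint S D := by
          rw [Set.disjoint_left]
          rintro y hyS ⟨g, ⟨hgG, hgR⟩, rfl⟩
          refine hBind g hgG fun i => ⟨?_, ?_⟩
          · intro hik
            have := hgR i
            simp only [hR] at this
            rwa [if_pos hik] at this
          · intro hki
            rcases eq_or_lt_of_le hki with h | h
            · have hij : i = j := Fin.ext h.symm
              rw [hij]; exact hyS
            · have := hgR i
              simp only [hR] at this
              rwa [if_neg (by omega), if_neg (by omega)] at this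
        obtain ⟨u, hSu, hDu, hum⟩ := hSan.measurablySeparable hDan hdisj
        refine ⟨fun i => if i = j then u else B i, ?_, ?_, ?_⟩
        · intro i; dsimp only; split_ifs; exacts [hum, hBm i]
        · intro i; dsimp only; split_ifs; exacts [hSu, hBS i]
        · intro x hx hall
          have hjk : (j : ℕ) = k := rfl
          have hxju : x j ∈ u := by
            have h : x j ∈ if j = j then u else B j := (hall j).1 (by omega)
            rwa [if_pos rfl] at h
          have hxjD : x j ∈ D := by
            refine ⟨x, ⟨hx, fun i => ?_⟩, rfl⟩
            simp only [hR]
            split_ifs with h1 h2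
            · have hij : i ≠ j := by
                intro hc; rw [hc] at h1; omega
              have h2 : x i ∈ if i = j then u else B i := (hall i).1 (by omega)
              rwa [if_neg hij] at h2
            · exact trivial
            · exact (hall i).2 (by omega)
          exact Set.disjoint_left.1 hDu hxjD hxju
    obtain ⟨B, hBm, hBS, hBind⟩ := main n le_rfl
    refine ⟨⋂ i, B i, MeasurableSet.iInter fun i => hBm i, Set.subset_iInter hBS, ?_⟩
    intro x hx hall
    refine hBind x hx fun i => ⟨fun _ => Set.mem_iInter.1 (hall i) i, fun h => ?_⟩
    exact absurd i.isLt (Nat.not_lt.2 h)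
  -- iterate: Borel cover, then saturate, repeat
  set F : Set X → Set X := fun S =>
    if h : AnalyticSet S ∧ (∀ x ∈ G, ¬ ∀ i, x i ∈ S) then (step S h.1 h.2).choose else ∅
    with hF
  have hFspec : ∀ S : Set X, AnalyticSet S → (∀ x ∈ G, ¬ ∀ i, x i ∈ S) →
      MeasurableSet (F S) ∧ S ⊆ F S ∧ ∀ x ∈ G, ¬ ∀ i, x i ∈ F S := by
    intro S h1 h2
    simp only [hF, dif_pos (And.intro h1 h2)]
    exact (step S h1 h2).choose_spec
  set C : ℕ → Set X := fun m => Nat.rec A (fun _ Cm => sat (F Cm)) m with hCdef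
  have hC : ∀ m, AnalyticSet (C m) ∧ (∀ x ∈ G, ¬ ∀ i, x i ∈ C m) := by
    intro m
    induction m with
    | zero => exact ⟨hA, hAind⟩
    | succ m ih =>
      obtain ⟨hFm, _, hFi⟩ := hFspec (C m) ih.1 ih.2
      exact ⟨hsat_an _ (borel_analytic hXan hFm), hsat_ind _ hFi⟩
  have hFm : ∀ m, MeasurableSet (F (C m)) := fun m => (hFspec (C m) (hC m).1 (hC m).2).1
  have hFsub : ∀ m, C m ⊆ F (C m) := fun m => (hFspec (C m) (hC m).1 (hC m).2).2.1
  have hFind : ∀ m, ∀ x ∈ G, ¬ ∀ i, x i ∈ F (C m) :=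
    fun m => (hFspec (C m) (hC m).1 (hC m).2).2.2
  have hCsucc : ∀ m, C (m + 1) = sat (F (C m)) := fun m => rfl
  have hmono : ∀ p q : ℕ, p ≤ q → F (C p) ⊆ F (C q) := by
    intro p q hpq
    induction q with
    | zero => rw [Nat.le_zero.1 hpq]
    | succ q ih =>
      rcases Nat.lt_or_ge p (q + 1) with h | h
      · refine (ih (Nat.lt_succ_iff.1 h)).trans ?_
        refine (hsat_sub (F (C q))).trans ?_
        rw [← hCsucc q]
        exact hFsub (q + 1)
      · rw [Nat.le_antisymm hpq h]
  refine ⟨⋃ m, F (C m), MeasurableSet.iUnion hFm, ?_, ?_, ?_⟩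
  · exact (hFsub 0).trans (Set.subset_iUnion (fun m => F (C m)) 0)
  · have key : ∀ a b : X, E a b → a ∈ ⋃ m, F (C m) → b ∈ ⋃ m, F (C m) := by
      intro a b hab ha
      obtain ⟨m, hm⟩ := Set.mem_iUnion.1 ha
      refine Set.mem_iUnion.2 ⟨m + 1, hFsub (m + 1) ?_⟩
      rw [hCsucc m]
      exact ⟨a, hm, hE.symm hab⟩
    exact fun a b hab => ⟨key a b hab, key b a (hE.symm hab)⟩
  · intro x hx hall
    have : ∀ i, ∃ m, x i ∈ F (C m) := fun i => Set.mem_iUnion.1 (hall i)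
    choose m hm using this
    have hnpos : 0 < n := by omega
    haveI : Nonempty (Fin n) := ⟨⟨0, hnpos⟩⟩
    set M : ℕ := Finset.univ.sup m with hM
    refine hFind M x hx fun i => hmono (m i) M (Finset.le_sup (Finset.mem_univ i)) (hm i)
end

section
/- Suppose E and F are equivalence relations on Cantor space 2^ℕ with the Baire property, every E-class is a countable union of (E ∩ F)-classes, and F is disjoint from the digraph 𝔾₀. Then both E and F are meager (as subsets of 2^ℕ × 2^ℕ). -/
/-- Concatenation of the first `n` bits of `u` with `c`. -/
def cat (n : ℕ) (u c : ℕ → Bool) : ℕ → Bool :=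
  fun m => if m < n then u m else c (m - n)

/-- Prepending a single bit. -/
def cons (i : Bool) (c : ℕ → Bool) : ℕ → Bool :=
  fun m => if m = 0 then i else c (m - 1)

/-- `s` codes a sequence of binary strings, `s n` of length `n` (only the first
`n` bits matter), such that every finite binary string is extended by some `s n`. -/
def DenseStrings (s : ℕ → ℕ → Bool) : Prop :=
  ∀ t : ℕ → Bool, ∀ k : ℕ, ∃ n : ℕ, k ≤ n ∧ ∀ i < k, s n i = t i

/-- The digraph `𝔾₀` on Cantor space determined by `s`. -/
def G0 (s : ℕ → ℕ → Bool) : Set ((ℕ → Bool) × (ℕ → Bool)) :=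
  {p | ∃ n c, p = (cat n (s n) (cons false c), cat n (s n) (cons true c))}

open Set Filter Topology TopologicalSpace

section KU

variable {X Y : Type*} [TopologicalSpace X] [TopologicalSpace Y]

/-- For an open dense set in a product, comeagerly many vertical sections are dense. -/
lemma residual_dense_section [SecondCountableTopology Y] {t : Set (X × Y)}
    (ht : IsOpen t) (htd : Dense t) : {x : X | Dense {y : Y | (x, y) ∈ t}} ∈ residual X := by
  obtain ⟨B, hBc, hBne, hBb⟩ := exists_countable_basis Y
  have hmem : (⋂ V ∈ B, {x : X | ∃ y ∈ V, (x, y) ∈ t}) ∈ residual X := by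
    refine (countable_bInter_mem hBc).2 fun V hV => ?_
    have hVo : IsOpen V := hBb.isOpen hV
    have hVne : V.Nonempty := nonempty_iff_ne_empty.2 (fun h => hBne (h ▸ hV))
    refine residual_of_dense_open ?_ ?_
    · have : {x : X | ∃ y ∈ V, (x, y) ∈ t} = Prod.fst '' (t ∩ (univ ×ˢ V)) := by
        ext x
        constructor
        · rintro ⟨y, hyV, hyt⟩; exact ⟨(x, y), ⟨hyt, trivial, hyV⟩, rfl⟩
        · rintro ⟨⟨a, b⟩, ⟨hpt, -, hbV⟩, rfl⟩; exact ⟨b, hbV, hpt⟩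
      rw [this]
      exact isOpenMap_fst _ (ht.inter (isOpen_univ.prod hVo))
    · rw [dense_iff_inter_open]
      rintro O hO ⟨x0, hx0⟩
      obtain ⟨⟨a, b⟩, ⟨ha, hb⟩, hab⟩ := htd.inter_open_nonempty (O ×ˢ V) (hO.prod hVo)
        ⟨(x0, hVne.choose), hx0, hVne.choose_spec⟩
      exact ⟨a, ha, b, hb, hab⟩
  refine mem_of_superset hmem fun x hx => ?_
  rw [mem_iInter₂] at hx
  rw [mem_setOf_eq, hBb.dense_iff]
  rintro V hV ⟨y0, hy0⟩
  obtain ⟨y, hyV, hyt⟩ := hx V hV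
  exact ⟨y, hyV, hyt⟩

/-- Half of Kuratowski–Ulam: a meager set in a product has comeagerly many meager sections. -/
lemma residual_meagre_section [SecondCountableTopology Y] {W : Set (X × Y)}
    (h : IsMeagre W) : {x : X | IsMeagre {y : Y | (x, y) ∈ W}} ∈ residual X := by
  rw [IsMeagre, mem_residual_iff] at h
  obtain ⟨S, hSo, hSd, hSc, hSsub⟩ := h
  have hmem : (⋂ u ∈ S, {x : X | Dense {y : Y | (x, y) ∈ u}}) ∈ residual X :=
    (countable_bInter_mem hSc).2 fun u hu => residual_dense_section (hSo u hu) (hSd u hu)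
  refine mem_of_superset hmem fun x hx => ?_
  rw [mem_iInter₂] at hx
  rw [mem_setOf_eq, IsMeagre]
  have hsub : (⋂ u ∈ S, {y : Y | (x, y) ∈ u}) ⊆ {y : Y | (x, y) ∈ W}ᶜ := by
    intro y hy hyW
    rw [mem_iInter₂] at hy
    exact (hSsub (fun u hu => hy u hu) : (x, y) ∈ Wᶜ) hyW
  refine mem_of_superset ((countable_bInter_mem hSc).2 fun u hu => ?_) hsub
  have : IsOpen {y : Y | (x, y) ∈ u} := (hSo u hu).preimage (Continuous.prodMk_right x)
  exact residual_of_dense_open this (hx u hu)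

/-- In a Baire space, a meager open set is empty. -/
lemma IsOpen.eq_empty_of_isMeagre [BaireSpace Y] {U : Set Y} (hU : IsOpen U)
    (hm : IsMeagre U) : U = ∅ := by
  by_contra h
  obtain ⟨y, hy, hyc⟩ := (dense_of_mem_residual hm).inter_open_nonempty U hU
    (nonempty_iff_ne_empty.2 h)
  exact hyc hy

/-- The other half of Kuratowski–Ulam: a Baire measurable set with comeagerly many meager
sections is meager. -/
lemma isMeagre_of_sections [SecondCountableTopology Y] [BaireSpace Y] {W : Set (X × Y)}
    (hW : BaireMeasurableSet W) (h : {x : X | IsMeagre {y : Y | (x, y) ∈ W}} ∈ residual X) :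
    IsMeagre W := by
  obtain ⟨U, hUo, hWU⟩ := hW.residualEq_isOpen
  set D : Set (X × Y) := {p | ¬ (p ∈ W ↔ p ∈ U)} with hD
  have hDm : IsMeagre D := by
    rw [IsMeagre]
    refine mem_of_superset hWU fun p hp hpD => ?_
    exact hpD (by rw [← eq_iff_iff]; exact hp)
  have hR := residual_meagre_section (Y := Y) hDm
  have hkey : ({x : X | IsMeagre {y : Y | (x, y) ∈ D}} ∩ {x : X | IsMeagre {y : Y | (x, y) ∈ W}})
      ⊆ {x : X | ∀ y, (x, y) ∉ U} := by
    rintro x ⟨hxD, hxW⟩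
    have hUx : IsMeagre {y : Y | (x, y) ∈ U} := by
      refine IsMeagre.mono (s := {y : Y | (x, y) ∈ W} ∪ {y : Y | (x, y) ∈ D}) ?_ ?_
      swap
      · rw [IsMeagre, compl_union]; exact inter_mem hxW hxD
      · intro y hy
        by_cases hyW : (x, y) ∈ W
        · exact Or.inl hyW
        · exact Or.inr fun hiff => hyW (hiff.2 hy)
    have hemp := (hUo.preimage (Continuous.prodMk_right x)).eq_empty_of_isMeagre hUx
    intro y hy
    rw [Set.eq_empty_iff_forall_notMem] at hemp
    exact hemp y hy
  have hN : IsMeagre {x : X | ∀ y, (x, y) ∉ U}ᶜ := by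
    rw [IsMeagre, compl_compl]
    exact mem_of_superset (inter_mem hR h) hkey
  have hUm : IsMeagre U := by
    have : U ⊆ Prod.fst ⁻¹' ({x : X | ∀ y, (x, y) ∉ U}ᶜ) := by
      rintro ⟨a, b⟩ hab h'
      exact h' b hab
    exact (hN.preimage_of_isOpenMap continuous_fst isOpenMap_fst).mono this
  have : W ⊆ U ∪ D := by
    intro p hp
    by_cases hpU : p ∈ U
    · exact Or.inl hpU
    · exact Or.inr fun hiff => hpU (hiff.1 hp)
  refine IsMeagre.mono this ?_
  rw [IsMeagre, compl_union]
  exact inter_mem hUm hDm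

/-- If `A ×ˢ A` is meager then `A` is meager. -/
lemma isMeagre_of_prod_self [SecondCountableTopology Y] {A : Set Y}
    (h : IsMeagre ((A ×ˢ A : Set (Y × Y)))) : IsMeagre A := by
  have hR := residual_meagre_section (X := Y) (Y := Y) h
  by_cases hAR : (A ∩ {x | IsMeagre {y : Y | (x, y) ∈ A ×ˢ A}}).Nonempty
  · obtain ⟨x, hxA, hx⟩ := hAR
    have heq : {y : Y | (x, y) ∈ A ×ˢ A} = A := by
      ext y; simp [hxA]
    simp only [Set.mem_setOf_eq] at hx
    rwa [heq] at hx
  · rw [not_nonempty_iff_eq_empty] at hAR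
    refine IsMeagre.mono (s := {x | IsMeagre {y : Y | (x, y) ∈ A ×ˢ A}}ᶜ) ?_ ?_
    swap
    · rw [IsMeagre, compl_compl]; exact hR
    · intro a ha hmem
      rw [Set.eq_empty_iff_forall_notMem] at hAR
      exact hAR a ⟨ha, hmem⟩
end KU

section Cantor

/-- The basic clopen cylinder of all sequences agreeing with `t` on the first `k` bits. -/
def Cyl (k : ℕ) (t : ℕ → Bool) : Set (ℕ → Bool) := {y | ∀ i < k, y i = t i}

lemma isOpen_cyl (k : ℕ) (t : ℕ → Bool) : IsOpen (Cyl k t) := by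
  have : Cyl k t = Set.pi {i | i < k} (fun i => {t i}) := by
    ext y; simp [Cyl, Set.pi]
  rw [this]
  exact isOpen_set_pi (Set.finite_Iio k) (fun a _ => isOpen_discrete _)

lemma exists_cyl_subset {U : Set (ℕ → Bool)} (hU : IsOpen U) {x : ℕ → Bool} (hx : x ∈ U) :
    ∃ k, Cyl k x ⊆ U := by
  have hnhds : U ∈ nhds x := hU.mem_nhds hx
  rw [nhds_pi, Filter.mem_pi'] at hnhds
  obtain ⟨I, t, hti, hsub⟩ := hnhds
  refine ⟨(I.sup id) + 1, fun y hy => hsub fun i hi => ?_⟩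
  have : y i = x i := hy i (Nat.lt_succ_of_le (Finset.le_sup (f := id) hi))
  rw [this]
  exact mem_of_mem_nhds (hti i)

variable {s : ℕ → ℕ → Bool}

/-- The map gluing `s n` with bit `i` and then `c`. -/
def glue (s : ℕ → ℕ → Bool) (n : ℕ) (i : Bool) (c : ℕ → Bool) : ℕ → Bool :=
  cat n (s n) (cons i c)

lemma continuous_glue (n : ℕ) (i : Bool) : Continuous (glue s n i) := by
  refine continuous_pi fun m => ?_
  simp only [glue, cat, cons]
  split_ifs with h1 h2
  · exact continuous_const
  · exact continuous_const
  · exact continuous_apply _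

lemma glue_mem_range (n : ℕ) (i : Bool) (c : ℕ → Bool) :
    (∀ m < n, glue s n i c m = s n m) ∧ glue s n i c n = i := by
  constructor
  · intro m hm; simp [glue, cat, hm]
  · simp [glue, cat, cons]

lemma isOpenMap_glue (n : ℕ) (i : Bool) : IsOpenMap (glue s n i) := by
  intro O hO
  set g : (ℕ → Bool) → (ℕ → Bool) := fun y j => y (n + 1 + j) with hg
  have hgc : Continuous g := continuous_pi fun j => continuous_apply _
  have himg : glue s n i '' O =
      ({y | (∀ m < n, y m = s n m) ∧ y n = i} ∩ g ⁻¹' O) := by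
    ext y
    constructor
    · rintro ⟨c, hcO, rfl⟩
      refine ⟨⟨(glue_mem_range n i c).1, (glue_mem_range n i c).2⟩, ?_⟩
      have : g (glue s n i c) = c := by
        funext j
        simp only [hg, glue, cat, cons]
        have h1 : ¬ (n + 1 + j < n) := by omega
        have h2 : n + 1 + j - n = j + 1 := by omega
        simp [h1, h2]
      rwa [Set.mem_preimage, this]
    · rintro ⟨⟨hy1, hy2⟩, hyO⟩
      refine ⟨g y, hyO, ?_⟩
      funext m
      simp only [glue, cat, cons, hg]
      by_cases h1 : m < n
      · simp [h1, hy1 m h1]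
      · simp only [h1, if_false]
        by_cases h2 : m - n = 0
        · have : m = n := by omega
          simp [h2, this, hy2]
        · have h3 : n + 1 + (m - n - 1) = m := by omega
          simp [h2, h3]
  rw [himg]
  have hclopen : IsOpen {y : ℕ → Bool | (∀ m < n, y m = s n m) ∧ y n = i} := by
    have : {y : ℕ → Bool | (∀ m < n, y m = s n m) ∧ y n = i} =
        Set.pi {m | m < n} (fun m => {s n m}) ∩ (fun y : ℕ → Bool => y n) ⁻¹' {i} := by
      ext y; simp [Set.pi]
    rw [this]
    exact (isOpen_set_pi (Set.finite_Iio n) fun a _ => isOpen_discrete _).inter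
      ((continuous_apply n).isOpen_preimage _ (isOpen_discrete _))
  exact hclopen.inter (hO.preimage hgc)

/-- The `𝔾₀` lemma of Kechris–Solecki–Todorcevic: a Baire measurable `𝔾₀`-independent
set is meager. -/
lemma kst (hs : DenseStrings s) {A : Set (ℕ → Bool)} (hA : BaireMeasurableSet A)
    (hind : ∀ p ∈ G0 s, ¬ (p.1 ∈ A ∧ p.2 ∈ A)) : IsMeagre A := by
  by_contra hnm
  obtain ⟨U, hUo, hAU⟩ := hA.residualEq_isOpen
  set D : Set (ℕ → Bool) := {y | ¬ (y ∈ A ↔ y ∈ U)} with hD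
  have hDm : IsMeagre D := by
    rw [IsMeagre]
    refine mem_of_superset hAU fun y hy hyD => hyD (by rw [← eq_iff_iff]; exact hy)
  have hUne : U.Nonempty := by
    rcases Set.eq_empty_or_nonempty U with h | h
    · exfalso
      refine hnm (hDm.mono fun y hyA => fun hiff => ?_)
      exact (h ▸ hiff.1 hyA : y ∈ (∅ : Set (ℕ → Bool)))
    · exact h
  obtain ⟨x, hxU⟩ := hUne
  obtain ⟨k, hk⟩ := exists_cyl_subset hUo hxU
  obtain ⟨n, hkn, hsn⟩ := hs x k
  have hpre : ∀ i : Bool, {c : ℕ → Bool | glue s n i c ∈ A} ∈ residual (ℕ → Bool) := by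
    intro i
    have hDpre : IsMeagre (glue s n i ⁻¹' D) :=
      hDm.preimage_of_isOpenMap (continuous_glue n i) (isOpenMap_glue n i)
    refine mem_of_superset hDpre fun c hc => ?_
    have hcyl : glue s n i c ∈ Cyl k x := by
      intro m hm
      have hmn : m < n := lt_of_lt_of_le hm hkn
      rw [(glue_mem_range n i c).1 m hmn, hsn m hm]
    have hU' : glue s n i c ∈ U := hk hcyl
    by_contra hcA
    exact hc (fun hiff => hcA (hiff.2 hU'))
  obtain ⟨c, hc0, hc1⟩ : ∃ c, glue s n false c ∈ A ∧ glue s n true c ∈ A := by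
    have := inter_mem (hpre false) (hpre true)
    obtain ⟨c, hc⟩ := (dense_of_mem_residual this).nonempty
    exact ⟨c, hc.1, hc.2⟩
  exact hind (glue s n false c, glue s n true c) ⟨n, c, rfl⟩ ⟨hc0, hc1⟩

end Cantor

theorem meager_of_g0_disjoint
    (s : ℕ → ℕ → Bool) (hs : DenseStrings s)
    (E F : (ℕ → Bool) → (ℕ → Bool) → Prop)
    (hE : Equivalence E) (hF : Equivalence F)
    (hEbp : BaireMeasurableSet {p : (ℕ → Bool) × (ℕ → Bool) | E p.1 p.2})
    (hFbp : BaireMeasurableSet {p : (ℕ → Bool) × (ℕ → Bool) | F p.1 p.2})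
    (hindex : ∀ x : ℕ → Bool, ∃ f : ℕ → (ℕ → Bool),
      ∀ y, E x y → ∃ n, E y (f n) ∧ F y (f n))
    (hdisj : ∀ p ∈ G0 s, ¬ F p.1 p.2) :
    IsMeagre {p : (ℕ → Bool) × (ℕ → Bool) | E p.1 p.2} ∧
      IsMeagre {p : (ℕ → Bool) × (ℕ → Bool) | F p.1 p.2} := by
  set WF : Set ((ℕ → Bool) × (ℕ → Bool)) := {p | F p.1 p.2} with hWF
  -- every F-class is 𝔾₀-independent
  have hFindep : ∀ x : ℕ → Bool, ∀ p ∈ G0 s,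
      ¬ (p.1 ∈ {y | F x y} ∧ p.2 ∈ {y | F x y}) := by
    rintro x p hp ⟨h1, h2⟩
    exact hdisj p hp (hF.trans (hF.symm h1) h2)
  -- comeagerly many x have Baire measurable F-section, hence meager F-section
  have hFsec : {x : ℕ → Bool | IsMeagre {y : ℕ → Bool | (x, y) ∈ WF}} ∈
      residual (ℕ → Bool) := by
    obtain ⟨U, hUo, hWU⟩ := hFbp.residualEq_isOpen
    set D : Set ((ℕ → Bool) × (ℕ → Bool)) := {p | ¬ (p ∈ WF ↔ p ∈ U)} with hD
    have hDm : IsMeagre D := by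
      rw [IsMeagre]
      exact mem_of_superset hWU fun p hp hpD => hpD (by rw [← eq_iff_iff]; exact hp)
    refine mem_of_superset (residual_meagre_section hDm) fun x hx => ?_
    -- the F-section at x is Baire measurable
    have hbm : BaireMeasurableSet {y : ℕ → Bool | (x, y) ∈ WF} := by
      have hUx : IsOpen {y : ℕ → Bool | (x, y) ∈ U} := hUo.preimage (Continuous.prodMk_right x)
      refine hUx.baireMeasurableSet.congr ?_
      refine mem_of_superset (show {y : ℕ → Bool | (x, y) ∈ D}ᶜ ∈ residual _ from hx)
        fun y hy => ?_
      simp only [Set.mem_setOf_eq, eq_iff_iff]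
      exact Iff.symm (not_not.1 hy)
    exact kst hs hbm (hFindep x)
  have hFm : IsMeagre WF := isMeagre_of_sections hFbp hFsec
  -- every F-class is meager
  have hFclass : ∀ x : ℕ → Bool, IsMeagre {y : ℕ → Bool | F x y} := by
    intro x
    refine isMeagre_of_prod_self (hFm.mono ?_)
    rintro ⟨a, b⟩ ⟨ha, hb⟩
    exact hF.trans (hF.symm ha) hb
  -- every E-class is meager
  have hEclass : ∀ x : ℕ → Bool, IsMeagre {y : ℕ → Bool | E x y} := by
    intro x
    obtain ⟨f, hf⟩ := hindex x
    refine IsMeagre.mono (s := ⋃ n, {y : ℕ → Bool | F (f n) y}) ?_ ?_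
    swap
    · exact isMeagre_iUnion fun n => hFclass (f n)
    · intro y hy
      obtain ⟨n, -, hFy⟩ := hf y hy
      exact Set.mem_iUnion.2 ⟨n, hF.symm hFy⟩
  refine ⟨?_, hFm⟩
  exact isMeagre_of_sections hEbp (Filter.univ_mem' fun x => hEclass x)
end
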